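/- Let G be a finite group generated by an involution x and an element y of order 3, with G ≇ ℤ/6, G ≇ ℤ₃ wr ℤ₂, and suppose G has a subgroup H of index 2. Then there is a Cayley digraph Γ on G with Cayley index 2 such that Aut(Γ) contains a regular subgroup distinct from G and isomorphic to H × ℤ₂. -/

import Mathlib

/-- The automorphism group of a digraph given by an adjacency relation. -/
def dAut {V : Type*} (adj : V → V → Prop) : Subgroup (Equiv.Perm V) where
  carrier := {σ | ∀ u v : V, adj (σ u) (σ v) ↔ adj u v}
  one_mem' := by intro u v; rfl
  mul_mem' := by
    intro a b ha hb u v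
    simp only [Set.mem_setOf_eq] at *
    rw [Equiv.Perm.mul_apply, Equiv.Perm.mul_apply, ha, hb]
  inv_mem' := by
    intro a ha u v
    simpa using (ha (a⁻¹ u) (a⁻¹ v)).symm

/-- Adjacency of the Cayley digraph `Cay(G,S)`. -/
def cayAdj (G : Type*) [Group G] (S : Set G) : G → G → Prop :=
  fun u v => v * u⁻¹ ∈ S

/-- The right regular representation of `G` in `Equiv.Perm G`. -/
def rightReg (G : Type*) [Group G] : G →* Equiv.Perm G where
  toFun g := Equiv.mulRight g⁻¹
  map_one' := by ext x; simp
  map_mul' := by intro a b; ext x; simp [mul_assoc]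


/-- The right regular representation of `G` as a subgroup of `Aut(Cay(G,S))`. -/
def cayleyRR (G : Type*) [Group G] (S : Set G) :
    Subgroup (dAut (cayAdj G S)) :=
  ((rightReg G).range).subgroupOf (dAut (cayAdj G S))

/-- A subgroup of `Equiv.Perm V` is regular if it is sharply transitive on `V`. -/
def IsRegularSub {V : Type*} (H : Subgroup (Equiv.Perm V)) : Prop :=
  ∀ v w : V, ∃! h : H, (h : Equiv.Perm V) v = w

/-- Adjacency of the cartesian product of two digraphs. -/
def cartAdj {α β : Type*} (adjG : α → α → Prop) (adjD : β → β → Prop) :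
    α × β → α × β → Prop :=
  fun u v => (u.1 = v.1 ∧ adjD u.2 v.2) ∨ (u.2 = v.2 ∧ adjG u.1 v.1)

/-- `pathLe adj i u v` : there is a directed path of length at most `i` from `u` to `v`. -/
def pathLe {V : Type*} (adj : V → V → Prop) : ℕ → V → V → Prop
  | 0, u, v => u = v
  | (n+1), u, v => pathLe adj n u v ∨ ∃ w, pathLe adj n u w ∧ adj w v

/-- The coordinate-swap automorphism of `Z₃ × Z₃`. -/
def swapAut : MulAut (Multiplicative (ZMod 3) × Multiplicative (ZMod 3)) :=
  MulEquiv.prodComm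

/-- The action of `Z₂` on `Z₃ × Z₃` by swapping coordinates. -/
def swapAction :
    Multiplicative (ZMod 2) →*
      MulAut (Multiplicative (ZMod 3) × Multiplicative (ZMod 3)) :=
  AddMonoidHom.toMultiplicativeLeft
    (ZMod.lift 2 ⟨zmultiplesHom _ (Additive.ofMul swapAut), by
      have h : swapAut * swapAut = 1 := by ext z <;> rfl
      simp only [zmultiplesHom_apply]
      rw [show ((2 : ℕ) : ℤ) = (1 : ℤ) + 1 by norm_num, add_zsmul, one_zsmul,
        ← ofMul_mul, h, ofMul_one]⟩)

/-- The wreath product `Z₃ ≀ Z₂ ≅ (Z₃ × Z₃) ⋊ Z₂`. -/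
abbrev Z3wrZ2 : Type :=
  (Multiplicative (ZMod 3) × Multiplicative (ZMod 3)) ⋊[swapAction]
    Multiplicative (ZMod 2)

namespace Stmt17Aux

structure Ctx (G : Type*) [Group G] where
  x : G
  a : G
  H : Subgroup G
  hx1 : x * x = 1
  ha3 : a * (a * a) = 1
  hane : a ≠ 1
  hba : x * (a * x) ≠ a
  hHi : H.index = 2
  haH : a ∈ H
  hxH : x ∉ H

namespace Ctx

variable {G : Type*} [Group G] (c : Ctx G)

def b : G := c.x * (c.a * c.x)
def S : Set G := {c.x, c.a, c.b}

lemma hxinv : c.x⁻¹ = c.x := inv_eq_of_mul_eq_one_right c.hx1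
lemma hainv : c.a⁻¹ = c.a * c.a := inv_eq_of_mul_eq_one_right c.ha3
lemma hxx (t : G) : c.x * (c.x * t) = t := by rw [← mul_assoc, c.hx1, one_mul]
lemma haa (t : G) : c.a * (c.a * (c.a * t)) = t := by
  have h : c.a * c.a * c.a = 1 := by rw [mul_assoc]; exact c.ha3
  rw [← mul_assoc, ← mul_assoc, h, one_mul]
lemma hainvinv : c.a⁻¹ * c.a⁻¹ = c.a := by
  rw [c.hainv, mul_assoc, c.haa]
lemma hxne1 : c.x ≠ 1 := fun h => c.hxH (h ▸ one_mem _)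
lemma hbne1 : c.b ≠ 1 := by
  intro h
  apply c.hane
  have h1 : c.x⁻¹ = c.a * c.x := inv_eq_of_mul_eq_one_right h
  have h2 : c.a * c.x = c.x := by rw [← h1, c.hxinv]
  exact mul_eq_right.mp h2
lemma habne : c.a ≠ c.b := fun h => c.hba h.symm
lemma hbH : c.b ∈ c.H := by
  have h1 := c.haH; have h2 := c.hxH
  show c.x * (c.a * c.x) ∈ c.H
  simp only [Subgroup.mul_mem_iff_of_index_two c.hHi]
  tauto
lemma hxa : c.x ≠ c.a := fun h => c.hxH (h ▸ c.haH)
lemma hxb : c.x ≠ c.b := fun h => c.hxH (h ▸ c.hbH)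
lemma hb3 : c.b * (c.b * c.b) = 1 := by
  show c.x * (c.a * c.x) * (c.x * (c.a * c.x) * (c.x * (c.a * c.x))) = 1
  simp only [mul_assoc, c.hxx]
  rw [c.haa, c.hx1]
lemma hbinv : c.b⁻¹ = c.b * c.b := inv_eq_of_mul_eq_one_right c.hb3
lemma hbb (t : G) : c.b * (c.b * (c.b * t)) = t := by
  have h : c.b * c.b * c.b = 1 := by rw [mul_assoc]; exact c.hb3
  rw [← mul_assoc, ← mul_assoc, h, one_mul]
lemma hbinvinv : c.b⁻¹ * c.b⁻¹ = c.b := by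
  rw [c.hbinv, mul_assoc, c.hbb]
lemma hxbx : c.x * (c.b * c.x) = c.a := by
  show c.x * (c.x * (c.a * c.x) * c.x) = c.a
  simp only [mul_assoc, c.hxx]
  rw [c.hx1, mul_one]

lemma mem_S {g : G} : g ∈ c.S ↔ g = c.x ∨ g = c.a ∨ g = c.b := by
  simp [S]

lemma hone_nmem : (1 : G) ∉ c.S := by
  rw [c.mem_S]
  rintro (h | h | h)
  exacts [c.hxne1 h.symm, c.hane h.symm, c.hbne1 h.symm]

lemma x_mem_S : c.x ∈ c.S := c.mem_S.mpr (Or.inl rfl)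
lemma a_mem_S : c.a ∈ c.S := c.mem_S.mpr (Or.inr (Or.inl rfl))
lemma b_mem_S : c.b ∈ c.S := c.mem_S.mpr (Or.inr (Or.inr rfl))

lemma conjS {g : G} : c.x * (g * c.x) ∈ c.S ↔ g ∈ c.S := by
  constructor
  · intro h
    have key : g = c.x * ((c.x * (g * c.x)) * c.x) := by
      simp only [mul_assoc, c.hxx]
      rw [c.hx1, mul_one]
    rcases c.mem_S.mp h with h' | h' | h'
    · rw [h', c.hx1, mul_one] at key; rw [key]; exact c.x_mem_S
    · rw [h'] at key; rw [key]; exact c.b_mem_S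
    · rw [h', c.hxbx] at key; rw [key]; exact c.a_mem_S
  · intro h
    rcases c.mem_S.mp h with rfl | rfl | rfl
    · rw [show c.x * (c.x * c.x) = c.x from by rw [c.hx1, mul_one]]; exact c.x_mem_S
    · exact c.b_mem_S
    · rw [c.hxbx]; exact c.a_mem_S


section Adj

lemma adj_iff {S : Set G} {u v : G} : cayAdj G S u v ↔ v * u⁻¹ ∈ S := Iff.rfl

lemma adj_mul {s u : G} (hs : s ∈ c.S) : cayAdj G c.S u (s * u) := by
  rw [adj_iff, mul_inv_cancel_right]; exact hs

lemma adj_elim {u v : G} (h : cayAdj G c.S u v) :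
    v = c.x * u ∨ v = c.a * u ∨ v = c.b * u := by
  rcases c.mem_S.mp h with h' | h' | h'
  · left; rw [← h', inv_mul_cancel_right]
  · right; left; rw [← h', inv_mul_cancel_right]
  · right; right; rw [← h', inv_mul_cancel_right]

lemma adj_back_x (u : G) : cayAdj G c.S (c.x * u) u := by
  rw [adj_iff]
  have : u * (c.x * u)⁻¹ = c.x⁻¹ := by group
  rw [this, c.hxinv]; exact c.x_mem_S

lemma adj_back_a (u : G) : cayAdj G c.S (c.a * (c.a * u)) u := by
  rw [adj_iff]
  have : u * (c.a * (c.a * u))⁻¹ = c.a⁻¹ * c.a⁻¹ := by group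
  rw [this, c.hainvinv]; exact c.a_mem_S

lemma adj_back_b (u : G) : cayAdj G c.S (c.b * (c.b * u)) u := by
  rw [adj_iff]
  have : u * (c.b * (c.b * u))⁻¹ = c.b⁻¹ * c.b⁻¹ := by group
  rw [this, c.hbinvinv]; exact c.b_mem_S

lemma prod_ne_one {s t : G} (hs : s ∈ c.S) (ht : t ∈ c.S) : t * (s * c.x) ≠ 1 := by
  intro h
  rcases c.mem_S.mp ht with rfl | rfl | rfl
  · -- t = x : x * (s * x) = 1 → s = 1
    have key : s = c.x * ((c.x * (s * c.x)) * c.x) := by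
      simp only [mul_assoc, c.hxx]; rw [c.hx1, mul_one]
    rw [h, one_mul, c.hx1] at key
    exact c.hone_nmem (key ▸ hs)
  · rcases c.mem_S.mp hs with rfl | rfl | rfl
    · rw [c.hx1, mul_one] at h; exact c.hane h
    · -- a * (a * x) = 1 : parity
      have hmem : c.a * (c.a * c.x) ∈ c.H := h ▸ one_mem _
      have h1 := c.haH; have h2 := c.hxH
      simp only [Subgroup.mul_mem_iff_of_index_two c.hHi] at hmem
      tauto
    · have hmem : c.a * (c.b * c.x) ∈ c.H := h ▸ one_mem _
      have h1 := c.haH; have h2 := c.hxH; have h3 := c.hbH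
      simp only [Subgroup.mul_mem_iff_of_index_two c.hHi] at hmem
      tauto
  · rcases c.mem_S.mp hs with rfl | rfl | rfl
    · rw [c.hx1, mul_one] at h; exact c.hbne1 h
    · have hmem : c.b * (c.a * c.x) ∈ c.H := h ▸ one_mem _
      have h1 := c.haH; have h2 := c.hxH; have h3 := c.hbH
      simp only [Subgroup.mul_mem_iff_of_index_two c.hHi] at hmem
      tauto
    · have hmem : c.b * (c.b * c.x) ∈ c.H := h ▸ one_mem _
      have h2 := c.hxH; have h3 := c.hbH
      simp only [Subgroup.mul_mem_iff_of_index_two c.hHi] at hmem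
      tauto

lemma no_xcycle {u w : G} (h1 : cayAdj G c.S (c.x * u) w) (h2 : cayAdj G c.S w u) :
    False := by
  rcases c.adj_elim h1 with rfl | rfl | rfl <;>
  rcases c.adj_elim h2 with h | h | h <;>
  · -- u = t * (s * (x * u)) for s,t in S
    first
    | (apply c.prod_ne_one c.x_mem_S c.x_mem_S
       apply mul_eq_right.mp
       simp only [mul_assoc] at h ⊢; exact h.symm)
    | (apply c.prod_ne_one c.x_mem_S c.a_mem_S
       apply mul_eq_right.mp
       simp only [mul_assoc] at h ⊢; exact h.symm)
    | (apply c.prod_ne_one c.x_mem_S c.b_mem_S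
       apply mul_eq_right.mp
       simp only [mul_assoc] at h ⊢; exact h.symm)
    | (apply c.prod_ne_one c.a_mem_S c.x_mem_S
       apply mul_eq_right.mp
       simp only [mul_assoc] at h ⊢; exact h.symm)
    | (apply c.prod_ne_one c.a_mem_S c.a_mem_S
       apply mul_eq_right.mp
       simp only [mul_assoc] at h ⊢; exact h.symm)
    | (apply c.prod_ne_one c.a_mem_S c.b_mem_S
       apply mul_eq_right.mp
       simp only [mul_assoc] at h ⊢; exact h.symm)
    | (apply c.prod_ne_one c.b_mem_S c.x_mem_S
       apply mul_eq_right.mp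
       simp only [mul_assoc] at h ⊢; exact h.symm)
    | (apply c.prod_ne_one c.b_mem_S c.a_mem_S
       apply mul_eq_right.mp
       simp only [mul_assoc] at h ⊢; exact h.symm)
    | (apply c.prod_ne_one c.b_mem_S c.b_mem_S
       apply mul_eq_right.mp
       simp only [mul_assoc] at h ⊢; exact h.symm)

end Adj


section Rigid

lemma mem_dAut_iff {V : Type*} {adj : V → V → Prop} {σ : Equiv.Perm V} :
    σ ∈ dAut adj ↔ ∀ u v, adj (σ u) (σ v) ↔ adj u v := Iff.rfl

variable {α : Equiv.Perm G}

lemma xedge (hα : α ∈ dAut (cayAdj G c.S)) (u : G) : α (c.x * u) = c.x * α u := by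
  have hadj : ∀ p q, cayAdj G c.S (α p) (α q) ↔ cayAdj G c.S p q := hα
  have h1 : cayAdj G c.S (α u) (α (c.x * u)) :=
    (hadj _ _).mpr (c.adj_mul c.x_mem_S)
  have h3 : ∀ w, cayAdj G c.S (α (c.x * u)) w → cayAdj G c.S w (α u) → False := by
    intro w hw1 hw2
    have e1 : cayAdj G c.S (c.x * u) (α.symm w) := by
      have h := hadj (c.x * u) (α.symm w)
      rw [Equiv.apply_symm_apply] at h
      exact h.mp hw1
    have e2 : cayAdj G c.S (α.symm w) u := by
      have h := hadj (α.symm w) u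
      rw [Equiv.apply_symm_apply] at h
      exact h.mp hw2
    exact c.no_xcycle e1 e2
  rcases c.adj_elim h1 with h | h | h
  · exact h
  · exfalso
    refine h3 (c.a * (c.a * α u)) ?_ (c.adj_back_a _)
    rw [h]; exact c.adj_mul c.a_mem_S
  · exfalso
    refine h3 (c.b * (c.b * α u)) ?_ (c.adj_back_b _)
    rw [h]; exact c.adj_mul c.b_mem_S


lemma E2a : c.a⁻¹ * c.b⁻¹ ∉ c.S := by
  rw [c.mem_S]
  rintro (h | h | h)
  · have hmem : c.a⁻¹ * c.b⁻¹ ∈ c.H := mul_mem (inv_mem c.haH) (inv_mem c.hbH)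
    rw [h] at hmem; exact c.hxH hmem
  · have h1 : c.b⁻¹ = c.a * c.a := by
      rw [← mul_inv_cancel_left c.a c.b⁻¹, h]
    exact c.habne (inv_injective (h1.trans c.hainv.symm)).symm
  · have h1 : c.a⁻¹ = c.b * c.b := by
      rw [← inv_mul_cancel_right c.a⁻¹ c.b, h]
    exact c.habne (inv_injective (h1.trans c.hbinv.symm))

lemma E2b : c.b⁻¹ * c.a⁻¹ ∉ c.S := by
  rw [c.mem_S]
  rintro (h | h | h)
  · have hmem : c.b⁻¹ * c.a⁻¹ ∈ c.H := mul_mem (inv_mem c.hbH) (inv_mem c.haH)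
    rw [h] at hmem; exact c.hxH hmem
  · have h1 : c.b⁻¹ = c.a * c.a := by
      rw [← inv_mul_cancel_right c.b⁻¹ c.a, h]
    exact c.habne (inv_injective (h1.trans c.hainv.symm)).symm
  · have h1 : c.a⁻¹ = c.b * c.b := by
      rw [← mul_inv_cancel_left c.b c.a⁻¹, h]
    exact c.habne (inv_injective (h1.trans c.hbinv.symm))


lemma dich (hα : α ∈ dAut (cayAdj G c.S)) (u : G) :
    (α (c.a*u) = c.a * α u ∧ α (c.b*u) = c.b * α u) ∨
    (α (c.a*u) = c.b * α u ∧ α (c.b*u) = c.a * α u) := by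
  have hA : cayAdj G c.S (α u) (α (c.a*u)) := (hα _ _).mpr (c.adj_mul c.a_mem_S)
  have hB : cayAdj G c.S (α u) (α (c.b*u)) := (hα _ _).mpr (c.adj_mul c.b_mem_S)
  have hne : α (c.a*u) ≠ α (c.b*u) := fun h =>
    c.habne (mul_right_cancel (α.injective h))
  rcases c.adj_elim hA with ha | ha | ha
  · exfalso
    rw [← c.xedge hα u] at ha
    exact c.hxa (mul_right_cancel (α.injective ha.symm))
  · rcases c.adj_elim hB with hb | hb | hb
    · exfalso
      rw [← c.xedge hα u] at hb
      exact c.hxb (mul_right_cancel (α.injective hb.symm))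
    · exact absurd (ha.trans hb.symm) hne
    · exact Or.inl ⟨ha, hb⟩
  · rcases c.adj_elim hB with hb | hb | hb
    · exfalso
      rw [← c.xedge hα u] at hb
      exact c.hxb (mul_right_cancel (α.injective hb.symm))
    · exact Or.inr ⟨ha, hb⟩
    · exact absurd (ha.trans hb.symm) hne

lemma tri_aa (hα : α ∈ dAut (cayAdj G c.S)) {u : G} (h : α (c.a*u) = c.a * α u) :
    α (c.a*(c.a*u)) = c.a * α (c.a*u) := by
  rcases c.dich hα (c.a*u) with ⟨h1, _⟩ | ⟨h1, _⟩
  · exact h1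
  · exfalso
    have hadj : cayAdj G c.S (α (c.a*(c.a*u))) (α u) := (hα _ _).mpr (c.adj_back_a u)
    rw [h1, h] at hadj
    have e : α u * (c.b*(c.a * α u))⁻¹ = c.a⁻¹ * c.b⁻¹ := by group
    rw [adj_iff, e] at hadj
    exact c.E2a hadj

lemma tri_ab (hα : α ∈ dAut (cayAdj G c.S)) {u : G} (h : α (c.a*u) = c.b * α u) :
    α (c.a*(c.a*u)) = c.b * α (c.a*u) := by
  rcases c.dich hα (c.a*u) with ⟨h1, _⟩ | ⟨h1, _⟩
  · exfalso
    have hadj : cayAdj G c.S (α (c.a*(c.a*u))) (α u) := (hα _ _).mpr (c.adj_back_a u)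
    rw [h1, h] at hadj
    have e : α u * (c.a*(c.b * α u))⁻¹ = c.b⁻¹ * c.a⁻¹ := by group
    rw [adj_iff, e] at hadj
    exact c.E2b hadj
  · exact h1

lemma tri_bb (hα : α ∈ dAut (cayAdj G c.S)) {u : G} (h : α (c.b*u) = c.b * α u) :
    α (c.b*(c.b*u)) = c.b * α (c.b*u) := by
  rcases c.dich hα (c.b*u) with ⟨_, h1⟩ | ⟨_, h1⟩
  · exact h1
  · exfalso
    have hadj : cayAdj G c.S (α (c.b*(c.b*u))) (α u) := (hα _ _).mpr (c.adj_back_b u)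
    rw [h1, h] at hadj
    have e : α u * (c.a*(c.b * α u))⁻¹ = c.b⁻¹ * c.a⁻¹ := by group
    rw [adj_iff, e] at hadj
    exact c.E2b hadj

lemma tri_ba (hα : α ∈ dAut (cayAdj G c.S)) {u : G} (h : α (c.b*u) = c.a * α u) :
    α (c.b*(c.b*u)) = c.a * α (c.b*u) := by
  rcases c.dich hα (c.b*u) with ⟨_, h1⟩ | ⟨_, h1⟩
  · exfalso
    have hadj : cayAdj G c.S (α (c.b*(c.b*u))) (α u) := (hα _ _).mpr (c.adj_back_b u)
    rw [h1, h] at hadj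
    have e : α u * (c.b*(c.a * α u))⁻¹ = c.a⁻¹ * c.b⁻¹ := by group
    rw [adj_iff, e] at hadj
    exact c.E2a hadj
  · exact h1

lemma step_a (hα : α ∈ dAut (cayAdj G c.S)) (u : G) :
    (α (c.a*(c.a*u)) = c.a * α (c.a*u)) ↔ (α (c.a*u) = c.a * α u) := by
  constructor
  · intro hq
    by_contra hn
    rcases c.dich hα u with ⟨h1, _⟩ | ⟨h1, _⟩
    · exact hn h1
    · have h2 := c.tri_ab hα h1
      exact c.habne (mul_right_cancel (hq.symm.trans h2))
  · exact c.tri_aa hα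

lemma step_b (hα : α ∈ dAut (cayAdj G c.S)) (u : G) :
    (α (c.a*(c.b*u)) = c.a * α (c.b*u)) ↔ (α (c.a*u) = c.a * α u) := by
  rcases c.dich hα u with ⟨ha1, hb1⟩ | ⟨ha1, hb1⟩
  · have h2 := c.tri_bb hα hb1
    rcases c.dich hα (c.b*u) with ⟨ha2, hb2⟩ | ⟨ha2, hb2⟩
    · exact iff_of_true ha2 ha1
    · exact absurd (c.habne (mul_right_cancel (hb2.symm.trans h2))) (by simp)
  · have h2 := c.tri_ba hα hb1
    rcases c.dich hα (c.b*u) with ⟨ha2, hb2⟩ | ⟨ha2, hb2⟩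
    · exact absurd (c.habne (mul_right_cancel (h2.symm.trans hb2))) (by simp)
    · refine iff_of_false (fun hq => ?_) (fun hq => ?_)
      · exact c.habne (mul_right_cancel (hq.symm.trans ha2))
      · exact c.habne (mul_right_cancel (hq.symm.trans ha1))

lemma step_x (hα : α ∈ dAut (cayAdj G c.S)) (u : G) :
    (α (c.a*(c.x*u)) = c.a * α (c.x*u)) ↔ (α (c.a*u) = c.a * α u) := by
  have hid : c.b * u = c.x*(c.a*(c.x*u)) := by
    show (c.x*(c.a*c.x))*u = _
    simp only [mul_assoc]
  have hbu : α (c.b*u) = c.x * α (c.a*(c.x*u)) := by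
    rw [hid, c.xedge hα]
  constructor
  · intro hq
    rw [hq, c.xedge hα u] at hbu
    have e : c.x * (c.a*(c.x * α u)) = c.b * α u := by
      show _ = (c.x*(c.a*c.x)) * α u
      simp only [mul_assoc]
    rw [e] at hbu
    rcases c.dich hα u with ⟨ha1, _⟩ | ⟨_, hb1⟩
    · exact ha1
    · exact absurd (c.habne (mul_right_cancel (hb1.symm.trans hbu))) (by simp)
  · intro hq
    rcases c.dich hα u with ⟨ha1, hb1⟩ | ⟨ha1, _⟩
    · rcases c.dich hα (c.x*u) with ⟨ha2, _⟩ | ⟨ha2, _⟩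
      · exact ha2
      · exfalso
        rw [ha2, c.xedge hα u] at hbu
        have e : c.x * (c.b*(c.x * α u)) = c.a * α u := by
          rw [← mul_assoc c.b c.x (α u), ← mul_assoc, ← mul_assoc]
          rw [show c.x * c.b * c.x = c.a from by rw [mul_assoc]; exact c.hxbx]
        rw [e] at hbu
        exact c.habne (mul_right_cancel (hbu.symm.trans hb1))
    · exact absurd (c.habne (mul_right_cancel (hq.symm.trans ha1))) (by simp)


lemma Qall (hα : α ∈ dAut (cayAdj G c.S))
    (hgen : Subgroup.closure ({c.x, c.a} : Set G) = ⊤)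
    (h1 : α (c.a * 1) = c.a * α 1) : ∀ u, α (c.a * u) = c.a * α u := by
  have hs : ∀ g : G, ∀ u, (α (c.a*(g*u)) = c.a * α (g*u)) ↔ (α (c.a*u) = c.a * α u) := by
    intro g
    have hg : g ∈ Subgroup.closure ({c.x, c.a} : Set G) := by
      rw [hgen]; trivial
    induction hg using Subgroup.closure_induction with
    | mem s hsmem =>
      rcases hsmem with rfl | rfl
      · exact c.step_x hα
      · exact c.step_a hα
    | one => intro u; rw [one_mul]
    | mul g h hg hh pg ph =>
      intro u
      rw [mul_assoc]
      exact (pg (h*u)).trans (ph u)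
    | inv g hg pg =>
      intro u
      have h2 := pg (g⁻¹ * u)
      rw [mul_inv_cancel_left] at h2
      exact h2.symm
  intro u
  have h2 := hs u 1
  rw [mul_one] at h2
  exact h2.mpr h1

lemma fixed_all (hα : α ∈ dAut (cayAdj G c.S))
    (hgen : Subgroup.closure ({c.x, c.a} : Set G) = ⊤)
    (h1 : α 1 = 1) (ha : α c.a = c.a) : ∀ g, α g = g := by
  have hQ : ∀ u, α (c.a * u) = c.a * α u := by
    refine c.Qall hα hgen ?_
    rw [mul_one, h1, mul_one, ha]
  have hX : ∀ u, α (c.x * u) = c.x * α u := c.xedge hα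
  have hs : ∀ g : G, ∀ u, α (g * u) = g * α u := by
    intro g
    have hg : g ∈ Subgroup.closure ({c.x, c.a} : Set G) := by
      rw [hgen]; trivial
    induction hg using Subgroup.closure_induction with
    | mem s hsmem =>
      rcases hsmem with rfl | rfl
      · exact hX
      · exact hQ
    | one => intro u; rw [one_mul, one_mul]
    | mul g h hg hh pg ph =>
      intro u
      rw [mul_assoc, pg (h*u), ph u, mul_assoc]
    | inv g hg pg =>
      intro u
      have h2 := pg (g⁻¹ * u)
      rw [mul_inv_cancel_left] at h2
      rw [h2, inv_mul_cancel_left]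
  intro g
  have := hs g 1
  rwa [mul_one, h1, mul_one] at this

/-- conjugation by x as a permutation -/
def Cx : Equiv.Perm G := (MulAut.conj c.x).toEquiv

lemma Cx_apply (g : G) : c.Cx g = c.x * (g * c.x) := by
  show (MulAut.conj c.x) g = _
  rw [MulAut.conj_apply, c.hxinv, mul_assoc]

lemma Cx_mem : c.Cx ∈ dAut (cayAdj G c.S) := by
  intro u v
  have key : c.Cx v * (c.Cx u)⁻¹ = c.x * ((v * u⁻¹) * c.x) := by
    rw [c.Cx_apply u, c.Cx_apply v]
    rw [show (c.x*(u*c.x))⁻¹ = c.x⁻¹*(u⁻¹*c.x⁻¹) from by group, c.hxinv]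
    simp only [mul_assoc, c.hxx]
  show cayAdj G c.S (c.Cx u) (c.Cx v) ↔ cayAdj G c.S u v
  rw [adj_iff, adj_iff, key, c.conjS]

lemma stab (hα : α ∈ dAut (cayAdj G c.S))
    (hgen : Subgroup.closure ({c.x, c.a} : Set G) = ⊤)
    (h1 : α 1 = 1) : (∀ g, α g = g) ∨ (∀ g, α g = c.x * (g * c.x)) := by
  have hd := c.dich hα 1
  rw [mul_one, mul_one, h1, mul_one, mul_one] at hd
  rcases hd with ⟨ha1, _⟩ | ⟨ha1, _⟩
  · exact Or.inl (c.fixed_all hα hgen h1 ha1)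
  · right
    have hβ : c.Cx * α ∈ dAut (cayAdj G c.S) := mul_mem c.Cx_mem hα
    have hβ1 : (c.Cx * α) 1 = 1 := by
      rw [Equiv.Perm.mul_apply, h1, c.Cx_apply, one_mul, c.hx1]
    have hβa : (c.Cx * α) c.a = c.a := by
      rw [Equiv.Perm.mul_apply, ha1]
      show c.Cx c.b = c.a
      rw [c.Cx_apply, c.hxbx]
    have hfix := c.fixed_all hβ hgen hβ1 hβa
    intro g
    have hg := hfix g
    rw [Equiv.Perm.mul_apply] at hg
    have hg2 : c.Cx (c.x * (g * c.x)) = g := by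
      rw [c.Cx_apply]
      simp only [mul_assoc, c.hxx]
      rw [c.hx1, mul_one]
    exact c.Cx.injective (hg.trans hg2.symm)


lemma rightReg_apply (g u : G) : rightReg G g u = u * g⁻¹ := rfl

lemma rightReg_mem (S : Set G) (g : G) : rightReg G g ∈ dAut (cayAdj G S) := by
  intro u v
  show cayAdj G S (u * g⁻¹) (v * g⁻¹) ↔ cayAdj G S u v
  rw [adj_iff, adj_iff]
  congr! 1
  group

lemma rightReg_injective : Function.Injective (rightReg G) := by
  intro g h e
  have := congrArg (fun (σ : Equiv.Perm G) => σ 1) e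
  simp only [rightReg_apply, one_mul] at this
  exact inv_injective this

def psi (g : G) (i : Bool) : Equiv.Perm G :=
  (rightReg G g)⁻¹ * (if i then c.Cx else 1)

lemma psi_mem (g : G) (i : Bool) : c.psi g i ∈ dAut (cayAdj G c.S) := by
  refine mul_mem (inv_mem (rightReg_mem c.S g)) ?_
  cases i
  · simpa using one_mem _
  · simpa using c.Cx_mem

lemma psi_apply (g : G) (i : Bool) (u : G) :
    c.psi g i u = (if i then c.x * (u * c.x) else u) * g := by
  cases i <;>
    simp only [psi, if_true, if_false, Equiv.Perm.mul_apply, Equiv.Perm.one_apply,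
      Bool.false_eq_true, ← map_inv (rightReg G), rightReg_apply, inv_inv, c.Cx_apply]

lemma psi_bijective (hgen : Subgroup.closure ({c.x, c.a} : Set G) = ⊤) :
    Function.Bijective (fun p : G × Bool =>
      (⟨c.psi p.1 p.2, c.psi_mem p.1 p.2⟩ : ↥(dAut (cayAdj G c.S)))) := by
  constructor
  · rintro ⟨g, i⟩ ⟨g', i'⟩ h
    simp only [Subtype.mk.injEq] at h
    have h1 := congrArg (fun (σ : Equiv.Perm G) => σ 1) h
    simp only [c.psi_apply, one_mul, mul_one, c.hx1] at h1
    have hgg : g = g' := by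
      cases i <;> cases i' <;> simpa using h1
    subst hgg
    have h2 : i = i' := by
      by_contra hne
      have hCx1 : c.Cx = 1 := by
        cases i <;> cases i'
        · exact absurd rfl hne
        · rw [psi, psi, if_pos rfl, if_neg (by simp)] at h
          exact (mul_left_cancel h.symm)
        · rw [psi, psi, if_pos rfl, if_neg (by simp)] at h
          exact (mul_left_cancel h)
        · exact absurd rfl hne
      have := congrArg (fun (σ : Equiv.Perm G) => σ c.a) hCx1
      simp only [c.Cx_apply, Equiv.Perm.one_apply] at this
      exact c.hba this
    rw [h2]
  · rintro ⟨α, hα⟩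
    have hβ : rightReg G (α 1) * α ∈ dAut (cayAdj G c.S) :=
      mul_mem (rightReg_mem c.S (α 1)) hα
    have hβ1 : (rightReg G (α 1) * α) 1 = 1 := by
      rw [Equiv.Perm.mul_apply, rightReg_apply, mul_inv_cancel]
    rcases c.stab hβ hgen hβ1 with hc | hc
    · refine ⟨(α 1, false), ?_⟩
      ext u
      show c.psi (α 1) false u = α u
      rw [c.psi_apply]
      simp only [if_false, Bool.false_eq_true]
      have := hc u
      rw [Equiv.Perm.mul_apply, rightReg_apply] at this
      exact (mul_inv_eq_iff_eq_mul.mp this).symm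
    · refine ⟨(α 1, true), ?_⟩
      ext u
      show c.psi (α 1) true u = α u
      rw [c.psi_apply]
      simp only [if_true]
      have := hc u
      rw [Equiv.Perm.mul_apply, rightReg_apply] at this
      exact (mul_inv_eq_iff_eq_mul.mp this).symm

lemma card_dAut (hgen : Subgroup.closure ({c.x, c.a} : Set G) = ⊤) :
    Nat.card ↥(dAut (cayAdj G c.S)) = 2 * Nat.card G := by
  have := Nat.card_congr (Equiv.ofBijective _ (c.psi_bijective hgen))
  rw [← this, Nat.card_prod, Nat.card_eq_fintype_card (α := Bool), Fintype.card_bool,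
    mul_comm]

end Rigid


end Ctx

section Z2

variable {P : Type*} [Group P]

lemma sq_pow_mod (σ : P) (hσ : σ * σ = 1) (n : ℕ) : σ ^ (n % 2) = σ ^ n := by
  conv_rhs => rw [← Nat.mod_add_div n 2]
  rw [pow_add, pow_mul, show σ^2 = 1 from by rw [pow_two, hσ], one_pow, mul_one]

def z2hom (σ : P) (hσ : σ * σ = 1) : Multiplicative (ZMod 2) →* P where
  toFun ε := σ ^ (Multiplicative.toAdd ε).val
  map_one' := by
    show σ ^ ((0 : ZMod 2)).val = 1
    rw [show ((0 : ZMod 2)).val = 0 from rfl, pow_zero]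
  map_mul' a b := by
    show σ ^ ((Multiplicative.toAdd a) + (Multiplicative.toAdd b)).val = _
    rw [ZMod.val_add, sq_pow_mod σ hσ, pow_add]

lemma z2hom_apply (σ : P) (hσ : σ * σ = 1) (ε : Multiplicative (ZMod 2)) :
    z2hom σ hσ ε = σ ^ (Multiplicative.toAdd ε).val := rfl

lemma z2hom_one (σ : P) (hσ : σ * σ = 1) :
    z2hom σ hσ (Multiplicative.ofAdd 1) = σ := by
  show σ ^ ((1 : ZMod 2)).val = σ
  rw [show ((1 : ZMod 2)).val = 1 from rfl, pow_one]

lemma z2cases (ε : Multiplicative (ZMod 2)) : ε = 1 ∨ ε = Multiplicative.ofAdd 1 := by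
  revert ε; decide

end Z2

end Stmt17Aux


open Stmt17Aux

set_option linter.unusedVariables false in
theorem stmt_17 {G : Type*} [Group G] [Fintype G]
    (x y : G) (hx : orderOf x = 2) (hy : orderOf y = 3)
    (hgen : Subgroup.closure {x, y} = ⊤)
    (h6 : ¬ Nonempty (G ≃* Multiplicative (ZMod 6)))
    (hwr : ¬ Nonempty (G ≃* Z3wrZ2))
    (H : Subgroup G) (hH : H.index = 2) :
    ∃ S : Set G, (1 : G) ∉ S ∧ (cayleyRR G S).index = 2 ∧
      ∃ K : Subgroup (Equiv.Perm G), K ≤ dAut (cayAdj G S) ∧ IsRegularSub K ∧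
        K ≠ (rightReg G).range ∧
        Nonempty (K ≃* (H × Multiplicative (ZMod 2))) := by
  classical
  have hx1 : x * x = 1 := by
    have h := pow_orderOf_eq_one x
    rwa [hx, pow_two] at h
  have hxinv : x⁻¹ = x := inv_eq_of_mul_eq_one_right hx1
  have hy3 : y ^ 3 = 1 := by
    have h := pow_orderOf_eq_one y
    rwa [hy] at h
  have hy3' : y * (y * y) = 1 := by
    have : y * (y * y) = y ^ 3 := by rw [pow_succ, pow_two, mul_assoc]
    rw [this, hy3]
  have hyne : y ≠ 1 := by
    intro h
    rw [h, orderOf_one] at hy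
    norm_num at hy
  have hyH : y ∈ H := by
    have h2 := Subgroup.sq_mem_of_index_two hH (y ^ 2)
    have h4 : (y ^ 2) ^ 2 = y := by
      rw [← pow_mul]
      norm_num
      rw [show (4 : ℕ) = 3 + 1 from rfl, pow_add, hy3, one_mul, pow_one]
    rwa [h4] at h2
  have hxH : x ∉ H := by
    intro hxh
    have hsub : Subgroup.closure ({x, y} : Set G) ≤ H := by
      rw [Subgroup.closure_le]
      intro g hg
      simp only [Set.mem_insert_iff, Set.mem_singleton_iff] at hg
      rcases hg with rfl | rfl
      exacts [hxh, hyH]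
    rw [hgen] at hsub
    rw [top_le_iff.mp hsub, Subgroup.index_top] at hH
    norm_num at hH
  have hba : x * (y * x) ≠ y := by
    intro hcomm0
    have hcomm : Commute x y := by
      have h := congrArg (fun t => t * x) hcomm0
      calc x * y = x * (y * (x * x)) := by rw [hx1, mul_one]
        _ = (x * (y * x)) * x := by simp only [mul_assoc]
        _ = y * x := h
    have hco : Nat.Coprime (orderOf x) (orderOf y) := by rw [hx, hy]; norm_num
    have h6ord : orderOf (x * y) = 6 := by
      rw [hcomm.orderOf_mul_eq_mul_orderOf_of_coprime hco, hx, hy]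
    have hzp : ∀ g : G, g ∈ Subgroup.zpowers (x * y) := by
      have hsub : Subgroup.closure ({x, y} : Set G) ≤ Subgroup.zpowers (x * y) := by
        rw [Subgroup.closure_le]
        intro g hg
        simp only [Set.mem_insert_iff, Set.mem_singleton_iff] at hg
        rcases hg with h | h
        · rw [h]
          have h3 : (x * y) ^ 3 = x := by
            rw [hcomm.mul_pow, hy3, mul_one,
              show (3 : ℕ) = 2 + 1 from rfl, pow_add, pow_two, hx1, one_mul, pow_one]
          refine Subgroup.mem_zpowers_iff.mpr ⟨(3 : ℤ), ?_⟩
          rw [show (3 : ℤ) = ((3 : ℕ) : ℤ) from by norm_num, zpow_natCast]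
          exact h3
        · rw [h]
          have h3 : (x * y) ^ 4 = y := by
            rw [hcomm.mul_pow]
            have hx2 : x ^ 2 = 1 := by rw [pow_two]; exact hx1
            have hx4 : x ^ 4 = 1 := by
              rw [show (4 : ℕ) = 2 * 2 from rfl, pow_mul, hx2, one_pow]
            have hy4 : y ^ 4 = y := by
              rw [show (4 : ℕ) = 3 + 1 from rfl, pow_add, hy3, one_mul, pow_one]
            rw [hx4, hy4, one_mul]
          refine Subgroup.mem_zpowers_iff.mpr ⟨(4 : ℤ), ?_⟩
          rw [show (4 : ℤ) = ((4 : ℕ) : ℤ) from by norm_num, zpow_natCast]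
          exact h3
      intro g
      exact hsub (by rw [hgen]; trivial)
    have hcyc : IsCyclic G := ⟨⟨x * y, hzp⟩⟩
    have hc6 : Nat.card G = 6 := by
      rw [← orderOf_eq_card_of_forall_mem_zpowers hzp, h6ord]
    have hc6' : Nat.card (Multiplicative (ZMod 6)) = 6 := by
      rw [Nat.card_congr (Multiplicative.toAdd (α := ZMod 6)), Nat.card_zmod]
    exact h6 ⟨mulEquivOfCyclicCardEq (hc6.trans hc6'.symm)⟩
  -- the context
  let c : Ctx G := ⟨x, y, H, hx1, hy3', hyne, hba, hH, hyH, hxH⟩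
  have hgen' : Subgroup.closure ({c.x, c.a} : Set G) = ⊤ := hgen
  refine ⟨c.S, c.hone_nmem, ?_, ?_⟩
  · -- index 2
    have hle : (rightReg G).range ≤ dAut (cayAdj G c.S) := by
      rintro σ ⟨g, rfl⟩
      exact Ctx.rightReg_mem c.S g
    have hcard1 : Nat.card ↥(cayleyRR G c.S) = Nat.card G := by
      calc Nat.card ↥(cayleyRR G c.S)
          = Nat.card ↥((rightReg G).range) :=
            Nat.card_congr (Subgroup.subgroupOfEquivOfLe hle).toEquiv
        _ = Nat.card G :=
            (Nat.card_congr (MonoidHom.ofInjective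
              (Ctx.rightReg_injective (G := G))).toEquiv).symm
    have hcmi := Subgroup.card_mul_index (cayleyRR G c.S)
    rw [hcard1, c.card_dAut hgen'] at hcmi
    have hpos : 0 < Nat.card G := Nat.card_pos
    refine Nat.eq_of_mul_eq_mul_left hpos ?_
    rw [hcmi]; ring
  · -- the regular subgroup
    set ρ : ↥H →* Equiv.Perm G := (rightReg G).comp H.subtype with hρ
    have hρ_apply : ∀ (h : ↥H) (u : G), ρ h u = u * (h : G)⁻¹ := fun h u => rfl
    set xL : Equiv.Perm G := Equiv.mulLeft x with hxL
    have hxL_apply : ∀ u, xL u = x * u := fun u => rfl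
    have hxL2 : xL * xL = 1 := by
      ext u
      show x * (x * u) = u
      rw [← mul_assoc, hx1, one_mul]
    have hxLmem : xL ∈ dAut (cayAdj G c.S) := by
      intro u v
      show cayAdj G c.S (x * u) (x * v) ↔ cayAdj G c.S u v
      have key : (x * v) * (x * u)⁻¹ = c.x * ((v * u⁻¹) * c.x) := by
        show _ = x * ((v * u⁻¹) * x)
        rw [mul_inv_rev, hxinv]
        group
      rw [Ctx.adj_iff, Ctx.adj_iff, key, c.conjS]
    set ξ := z2hom xL hxL2 with hξ
    have hcomm : ∀ (m : ↥H) (n : Multiplicative (ZMod 2)), Commute (ρ m) (ξ n) := by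
      intro m n
      have hbase : Commute (ρ m) xL := by
        show ρ m * xL = xL * ρ m
        ext u
        show (xL u) * (m : G)⁻¹ = x * (u * (m : G)⁻¹)
        rw [hxL_apply, mul_assoc]
      rw [hξ, z2hom_apply]
      exact hbase.pow_right _
    set ψ := ρ.noncommCoprod ξ hcomm with hψ
    have hψ_apply : ∀ p : ↥H × Multiplicative (ZMod 2), ψ p = ρ p.1 * ξ p.2 :=
      fun p => rfl
    have hξval : ∀ ε, ξ ε = 1 ∨ (ξ ε = xL ∧ ε = Multiplicative.ofAdd 1) := by
      intro ε
      rcases z2cases ε with rfl | rfl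
      · exact Or.inl (map_one ξ)
      · exact Or.inr ⟨z2hom_one xL hxL2, rfl⟩
    have hψval : ∀ (h : ↥H) (ε) (u : G),
        ψ (h, ε) u = (if ε = Multiplicative.ofAdd 1 then x * u else u) * (h : G)⁻¹ := by
      intro h ε u
      rw [hψ_apply, Equiv.Perm.mul_apply]
      rcases z2cases ε with rfl | rfl
      · rw [if_neg (by decide), map_one]
        exact hρ_apply h u
      · rw [if_pos rfl, hξ, z2hom_one xL hxL2]
        exact hρ_apply h (x * u)
    refine ⟨ψ.range, ?_, ?_, ?_, ?_⟩
    · -- K ≤ dAut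
      rintro σ ⟨⟨h, ε⟩, rfl⟩
      rw [hψ_apply]
      refine mul_mem (Ctx.rightReg_mem c.S (h : G)) ?_
      rw [hξ, z2hom_apply]
      exact pow_mem hxLmem _
    · -- regular
      intro v w
      have memH_iff : ∀ p q : G, p * q ∈ H ↔ (p ∈ H ↔ q ∈ H) := fun p q =>
        Subgroup.mul_mem_iff_of_index_two hH
      by_cases hvw : w⁻¹ * v ∈ H
      · refine ⟨⟨ψ (⟨w⁻¹ * v, hvw⟩, 1), ⟨_, rfl⟩⟩, ?_, ?_⟩
        · show ψ (⟨w⁻¹ * v, hvw⟩, 1) v = w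
          rw [hψval, if_neg (by decide)]
          group
        · rintro ⟨σ, ⟨⟨h, ε⟩, rfl⟩⟩ hσv
          simp only at hσv
          rw [hψval] at hσv
          have hεcase : ε = 1 := by
            rcases z2cases ε with rfl | rfl
            · rfl
            · exfalso
              rw [if_pos rfl] at hσv
              -- (x*v) * h⁻¹ = w  with  w⁻¹ v ∈ H  gives x ∈ H
              have hh : (h : G) = w⁻¹ * (x * v) := by
                rw [← hσv]; group
              have hmem := h.2
              rw [hh] at hmem
              simp only [memH_iff] at hmem hvw
              have := inv_mem_iff (H := H) (x := w)
              tauto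
          subst hεcase
          rw [if_neg (by decide)] at hσv
          have hh : (h : G) = w⁻¹ * v := by rw [← hσv]; group
          have hsub : h = (⟨w⁻¹ * v, hvw⟩ : ↥H) := Subtype.ext hh
          subst hsub
          exact Subtype.ext rfl
      · have hmem2 : w⁻¹ * (x * v) ∈ H := by
          simp only [memH_iff] at hvw ⊢
          have := inv_mem_iff (H := H) (x := w)
          tauto
        refine ⟨⟨ψ (⟨w⁻¹ * (x * v), hmem2⟩, Multiplicative.ofAdd 1), ⟨_, rfl⟩⟩, ?_, ?_⟩
        · show ψ (⟨w⁻¹ * (x * v), hmem2⟩, Multiplicative.ofAdd 1) v = w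
          rw [hψval, if_pos rfl]
          group
        · rintro ⟨σ, ⟨⟨h, ε⟩, rfl⟩⟩ hσv
          simp only at hσv
          rw [hψval] at hσv
          have hεcase : ε = Multiplicative.ofAdd 1 := by
            rcases z2cases ε with rfl | rfl
            · exfalso
              rw [if_neg (by decide)] at hσv
              have hh : (h : G) = w⁻¹ * v := by rw [← hσv]; group
              exact hvw (hh ▸ h.2)
            · rfl
          subst hεcase
          rw [if_pos rfl] at hσv
          have hh : (h : G) = w⁻¹ * (x * v) := by rw [← hσv]; group
          have hsub : h = (⟨w⁻¹ * (x * v), hmem2⟩ : ↥H) := Subtype.ext hh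
          subst hsub
          exact Subtype.ext rfl
    · -- K ≠ rightReg range
      intro hKR
      have hxLK : xL ∈ ψ.range := by
        refine ⟨(1, Multiplicative.ofAdd 1), ?_⟩
        rw [hψ_apply]
        show ρ 1 * ξ (Multiplicative.ofAdd 1) = xL
        rw [map_one, one_mul, hξ, z2hom_one xL hxL2]
      rw [hKR] at hxLK
      obtain ⟨g, hg⟩ := hxLK
      have h1 := congrArg (fun (σ : Equiv.Perm G) => σ 1) hg
      simp only [Ctx.rightReg_apply, one_mul, hxL_apply, mul_one] at h1
      have h2 := congrArg (fun (σ : Equiv.Perm G) => σ y) hg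
      simp only [Ctx.rightReg_apply, hxL_apply] at h2
      rw [h1] at h2
      -- h2 : y * x = x * y
      apply hba
      rw [h2, ← mul_assoc, hx1, one_mul]
    · -- isomorphism type
      have hinj : Function.Injective ψ := by
        intro p q hpq
        obtain ⟨h1, ε1⟩ := p
        obtain ⟨h2, ε2⟩ := q
        have hv := congrArg (fun (σ : Equiv.Perm G) => σ 1) hpq
        simp only [hψval, mul_one] at hv
        have hε : ε1 = ε2 := by
          rcases z2cases ε1 with rfl | rfl <;> rcases z2cases ε2 with rfl | rfl
          · rfl
          · exfalso
            rw [if_neg (by decide), if_pos rfl, one_mul] at hv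
            have hxeq : x = (h1 : G)⁻¹ * (h2 : G) := by rw [hv]; group
            exact hxH (hxeq ▸ mul_mem (inv_mem h1.2) h2.2)
          · exfalso
            rw [if_pos rfl, if_neg (by decide), one_mul] at hv
            have hxeq : x = (h2 : G)⁻¹ * (h1 : G) := by rw [← hv]; group
            exact hxH (hxeq ▸ mul_mem (inv_mem h2.2) h1.2)
          · rfl
        subst hε
        have hh : h1 = h2 := by
          rcases z2cases ε1 with rfl | rfl
          · rw [if_neg (by decide)] at hv
            simp only [one_mul] at hv
            exact Subtype.ext (inv_injective hv)
          · rw [if_pos rfl] at hv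
            exact Subtype.ext (inv_injective (mul_left_cancel hv))
        rw [hh]
      exact ⟨(MonoidHom.ofInjective hinj).symm⟩
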